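/- arXiv:1311.2993 — 2 statements merged into one kernel-verified Lean document; each statement's English description precedes it below -/
import Mathlib

section
/- Let B be a finite set, M a right-angled Coxeter matrix on B, and W the associated Coxeter group with generators (r_b)_{b ∈ B}. Let φ : W → F_2 be the group homomorphism with φ(r_b) = 1 for all b ∈ B (F_2 viewed as the additive group of order 2). Let V be a finite-dimensional F_2-vector space of dimension s, (λ_b)_{b ∈ B} a family of vectors spanning V, and λ : W → V the group homomorphism with λ(r_b) = λ_b for all b. Then ker λ ⊆ ker φ if and only if there exists an F_2-linear isomorphism e : V ≃ F_2^s such that for every b ∈ B the vector e(λ_b) has odd weight. -/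
/-- A vector `w ∈ F₂^s` has odd weight if it has an odd number of coordinates
equal to `1`. -/
def OddWeight {s : ℕ} (w : Fin s → ZMod 2) : Prop :=
  Odd (Finset.univ.filter fun i => w i = 1).card

lemma oddWeight_iff_sum {s : ℕ} (w : Fin s → ZMod 2) :
    Odd (Finset.univ.filter fun i => w i = 1).card ↔ ∑ i, w i = 1 := by
  classical
  have h1 : ∑ i, w i = ∑ i ∈ Finset.univ.filter (fun i => w i = 1), w i := by
    refine (Finset.sum_filter_of_ne ?_).symm
    intro i _ hne
    revert hne
    generalize w i = x
    revert x; decide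
  have h2 : ∑ i ∈ Finset.univ.filter (fun i => w i = 1), w i
      = ((Finset.univ.filter fun i => w i = 1).card : ZMod 2) := by
    rw [Finset.sum_congr rfl (fun i hi => (Finset.mem_filter.mp hi).2),
      Finset.sum_const, nsmul_eq_mul, mul_one]
  rw [h1, h2]
  generalize (Finset.univ.filter fun i => w i = 1).card = n
  rw [← ZMod.natCast_mod n 2, Nat.odd_iff]
  rcases Nat.mod_two_eq_zero_or_one n with h | h <;> rw [h] <;> decide

lemma aux_equiv {V : Type*} [AddCommGroup V] [Module (ZMod 2) V]
    [FiniteDimensional (ZMod 2) V] {s : ℕ} (hs : Module.finrank (ZMod 2) V = s)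
    (f : V →ₗ[ZMod 2] ZMod 2) {v0 : V} (hv0 : f v0 = 1) :
    ∃ e : V ≃ₗ[ZMod 2] (Fin s → ZMod 2), ∀ v, ∑ i, e v i = f v := by
  classical
  let b : Module.Basis (Fin s) (ZMod 2) V := (Module.finBasis (ZMod 2) V).reindex (finCongr hs)
  have hex : ∃ i0, f (b i0) = 1 := by
    by_contra hc
    push_neg at hc
    have hz : ∀ i, f (b i) = 0 := by
      intro i
      have := hc i
      revert this; generalize f (b i) = x; revert x; decide
    have hf0 : f = 0 := b.ext (by simpa using hz)
    rw [hf0] at hv0; simp at hv0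
  obtain ⟨i0, hi0⟩ := hex
  set σb : V →ₗ[ZMod 2] ZMod 2 := ∑ i, b.coord i with hσb_def
  have hσb : ∀ j, σb (b j) = 1 := by
    intro j
    simp [hσb_def, LinearMap.sum_apply, Module.Basis.coord_apply, Module.Basis.repr_self,
      Finsupp.single_apply]
  set f' : V →ₗ[ZMod 2] ZMod 2 := σb + f with hf'_def
  have hf'i0 : f' (b i0) = 0 := by
    simp [hf'_def, hσb i0, hi0]
    decide
  set T : V →ₗ[ZMod 2] V := LinearMap.id + f'.smulRight (b i0) with hT_def
  have hT_apply : ∀ v, T v = v + f' v • b i0 := fun v => rfl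
  have hT : Function.Involutive T := by
    intro v
    rw [hT_apply, hT_apply, map_add, map_smul, hf'i0, smul_zero, add_zero]
    rw [add_assoc, ← add_smul, CharTwo.add_self_eq_zero, zero_smul, add_zero]
  let E : V ≃ₗ[ZMod 2] V := LinearEquiv.ofInvolutive T hT
  let b2 : Module.Basis (Fin s) (ZMod 2) V := b.map E
  have hb2 : ∀ i, b2 i = b i + f' (b i) • b i0 := by
    intro i
    simp only [b2, Module.Basis.map_apply]
    exact hT_apply (b i)
  have hfb2 : ∀ i, f (b2 i) = 1 := by
    intro i
    rw [hb2, map_add, map_smul, hi0, smul_eq_mul, mul_one, hf'_def]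
    simp only [LinearMap.add_apply, hσb i]
    have := CharTwo.add_self_eq_zero (f (b i))
    linear_combination this
  refine ⟨b2.equivFun, fun v => ?_⟩
  set sumF : (Fin s → ZMod 2) →ₗ[ZMod 2] ZMod 2 := ∑ i, LinearMap.proj i with hsumF
  have : sumF.comp (b2.equivFun : V →ₗ[ZMod 2] (Fin s → ZMod 2)) = f := by
    refine b2.ext fun j => ?_
    simp only [LinearMap.comp_apply, LinearEquiv.coe_coe, Module.Basis.equivFun_self, hfb2 j]
    simp [hsumF, LinearMap.sum_apply, Finset.sum_pi_single']
  have hv := congrArg (fun g => g v) this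
  simpa [hsumF, LinearMap.sum_apply] using hv

/-- Let `B` be a finite set, `M` a right-angled Coxeter matrix on `B`,
`W` the associated Coxeter group with simple generators `cs.simple b`. Let
`phi : W →* Multiplicative (ZMod 2)` be the homomorphism sending every simple
generator to `1 ∈ F₂`. Let `V` be a finite-dimensional `F₂`-vector space of
dimension `s`, `lam : B → V` a family of vectors spanning `V`, and
`l : W →* Multiplicative V` the homomorphism with `l (cs.simple b) = lam b` for
all `b`. Then `ker l ⊆ ker phi` iff there exists an `F₂`-linear isomorphism
`e : V ≃ₗ F₂^s` such that `e (lam b)` has odd weight for every `b`. -/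
theorem coxeter_colouring_orientability
    {B : Type*} [Finite B] (M : CoxeterMatrix B)
    (hM : ∀ b b' : B, b ≠ b' → M b b' = 2 ∨ M b b' = 0)
    {W : Type*} [Group W] (cs : CoxeterSystem M W)
    (phi : W →* Multiplicative (ZMod 2))
    (hphi : ∀ b : B, phi (cs.simple b) = Multiplicative.ofAdd (1 : ZMod 2))
    (V : Type*) [AddCommGroup V] [Module (ZMod 2) V]
    [FiniteDimensional (ZMod 2) V] (s : ℕ)
    (hs : Module.finrank (ZMod 2) V = s)
    (lam : B → V)
    (hspan : Submodule.span (ZMod 2) (Set.range lam) = ⊤)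
    (l : W →* Multiplicative V)
    (hl : ∀ b : B, l (cs.simple b) = Multiplicative.ofAdd (lam b)) :
    l.ker ≤ phi.ker ↔
      ∃ e : V ≃ₗ[ZMod 2] (Fin s → ZMod 2), ∀ b : B, OddWeight (e (lam b)) := by
  classical
  constructor
  · intro h
    rcases isEmpty_or_nonempty B with hB | hB
    · exact ⟨((Module.finBasis (ZMod 2) V).reindex (finCongr hs)).equivFun,
        fun b => (IsEmpty.false b).elim⟩
    · obtain ⟨b0⟩ := hB
      -- surjectivity of l (as a map onto ofAdd v)
      have hrange : ∀ v : V, ∃ w : W, l w = Multiplicative.ofAdd v := by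
        intro v
        have hv : v ∈ Submodule.span (ZMod 2) (Set.range lam) := hspan ▸ Submodule.mem_top
        induction hv using Submodule.span_induction with
        | mem x hx => obtain ⟨b, rfl⟩ := hx; exact ⟨cs.simple b, hl b⟩
        | zero => exact ⟨1, by simp⟩
        | add x y _ _ hx hy =>
            obtain ⟨w1, h1⟩ := hx; obtain ⟨w2, h2⟩ := hy
            exact ⟨w1 * w2, by rw [map_mul, h1, h2, ← ofAdd_add]⟩
        | smul c x _ hx =>
            obtain ⟨w, hw⟩ := hx
            rcases (show c = 0 ∨ c = 1 by revert c; decide) with rfl | rfl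
            · exact ⟨1, by simp⟩
            · exact ⟨w, by simpa using hw⟩
      choose F hF using hrange
      have key : ∀ w w' : W, l w = l w' → phi w = phi w' := by
        intro w w' hww
        have hk : w * w'⁻¹ ∈ l.ker := by
          rw [MonoidHom.mem_ker, map_mul, map_inv, hww, mul_inv_cancel]
        have := h hk
        rw [MonoidHom.mem_ker, map_mul, map_inv] at this
        exact mul_inv_eq_one.mp this
      let f0 : V →+ ZMod 2 :=
        { toFun := fun v => Multiplicative.toAdd (phi (F v))
          map_zero' := by
            have h0 : phi (F 0) = phi 1 := key _ _ (by rw [hF, map_one, ofAdd_zero])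
            show Multiplicative.toAdd (phi (F 0)) = 0
            rw [h0, map_one]; rfl
          map_add' := fun v v' => by
            have ha : phi (F (v + v')) = phi (F v * F v') :=
              key _ _ (by rw [hF, map_mul, hF, hF, ← ofAdd_add])
            show Multiplicative.toAdd (phi (F (v + v'))) =
              Multiplicative.toAdd (phi (F v)) + Multiplicative.toAdd (phi (F v'))
            rw [ha, map_mul]; rfl }
      let f : V →ₗ[ZMod 2] ZMod 2 := f0.toZModLinearMap 2
      have hflam : ∀ b : B, f (lam b) = 1 := by
        intro b
        have : phi (F (lam b)) = phi (cs.simple b) := key _ _ (by rw [hF, hl])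
        show Multiplicative.toAdd (phi (F (lam b))) = 1
        rw [this, hphi]; rfl
      obtain ⟨e, he⟩ := aux_equiv hs f (hflam b0)
      exact ⟨e, fun b => (oddWeight_iff_sum _).mpr (by rw [he, hflam])⟩
  · rintro ⟨e, he⟩
    set sumF : (Fin s → ZMod 2) →ₗ[ZMod 2] ZMod 2 := ∑ i, LinearMap.proj i with hsumF
    set f : V →ₗ[ZMod 2] ZMod 2 := sumF.comp e.toLinearMap with hf
    have hflam : ∀ b : B, f (lam b) = 1 := by
      intro b
      have := (oddWeight_iff_sum (e (lam b))).mp (he b)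
      simpa [hf, hsumF, LinearMap.sum_apply] using this
    set ψ : W →* Multiplicative (ZMod 2) :=
      (AddMonoidHom.toMultiplicative f.toAddMonoidHom).comp l with hψ
    have hphiψ : phi = ψ := by
      refine cs.ext_simple fun b => ?_
      rw [hphi, hψ]
      simp only [MonoidHom.comp_apply, hl]
      show _ = Multiplicative.ofAdd (f (lam b))
      rw [hflam]
    intro w hw
    rw [MonoidHom.mem_ker] at hw ⊢
    rw [hphiψ, hψ]
    simp only [MonoidHom.comp_apply, hw, map_one]
end

section
/- Let G and H be groups and f : G → H a surjective group homomorphism whose kernel equals {1, r} for some element r ∈ G of order 2. Let V be an F_2-vector space (viewed as an abelian group in which every element has order at most 2), let λ : G → V be a group homomorphism with λ(r) ≠ 0, let W = V / span_{F_2}{λ(r)} with quotient map π : V → W, and let μ : H → W be a group homomorphism satisfying μ ∘ f = π ∘ λ. Then f restricts to a group isomorphism from ker λ onto ker μ. -/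
/-- Let `G`, `H` be groups and `f : G →* H` a surjective homomorphism
whose kernel equals `{1, r}` for an element `r` of order `2`. Let `V` be an
`F₂`-vector space (viewed multiplicatively as an abelian group of exponent `2`),
`l : G →* Multiplicative V` a homomorphism with `l r ≠ 1` (i.e. `λ(r) ≠ 0`),
`W = V / span {λ(r)}` with quotient map `π`, and `m : H →* Multiplicative W`
a homomorphism with `m ∘ f = π ∘ l`. Then `f` restricts to a group isomorphism
from `ker l` onto `ker m`. -/
theorem restriction_to_kernels_isomorphism
    {G H : Type*} [Group G] [Group H] (f : G →* H)
    (hf : Function.Surjective f)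
    (r : G) (hr : orderOf r = 2)
    (hker : (f.ker : Set G) = {1, r})
    (V : Type*) [AddCommGroup V] [Module (ZMod 2) V]
    (l : G →* Multiplicative V)
    (hlr : l r ≠ 1)
    (m : H →* Multiplicative
      (V ⧸ Submodule.span (ZMod 2) {Multiplicative.toAdd (l r)}))
    (hm : ∀ g : G, m (f g) = Multiplicative.ofAdd
      ((Submodule.span (ZMod 2) {Multiplicative.toAdd (l r)}).mkQ
        (Multiplicative.toAdd (l g)))) :
    ∃ e : l.ker ≃* m.ker, ∀ x : l.ker, (e x : H) = f (x : G) := by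
  have hrker : r ∈ f.ker := by
    have : r ∈ ({1, r} : Set G) := by simp
    rwa [← hker] at this
  have hfr : f r = 1 := hrker
  -- l r + l r = 0
  have hlr2 : Multiplicative.toAdd (l r) + Multiplicative.toAdd (l r) = 0 := by
    have h2 : (2 : ZMod 2) • Multiplicative.toAdd (l r) = 0 := by
      have : (2 : ZMod 2) = 0 := by decide
      rw [this, zero_smul]
    rwa [two_smul] at h2
  -- the map
  have hmap : ∀ x : l.ker, f (x : G) ∈ m.ker := by
    intro x
    have hx : l (x : G) = 1 := x.2
    have := hm (x : G)
    rw [hx] at this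
    simpa [MonoidHom.mem_ker] using this
  let φ : l.ker →* m.ker :=
    { toFun := fun x => ⟨f (x : G), hmap x⟩
      map_one' := by ext; simp
      map_mul' := by intro a b; ext; simp }
  have hinj : Function.Injective φ := by
    intro x y hxy
    have h1 : f (x : G) = f (y : G) := congrArg Subtype.val hxy
    have h2 : (x : G) * (y : G)⁻¹ ∈ f.ker := by
      simp [MonoidHom.mem_ker, h1]
    rw [← SetLike.mem_coe, hker] at h2
    rcases h2 with h2 | h2
    · have : (x : G) = (y : G) := by
        have := mul_inv_eq_one.mp h2
        exact this
      exact Subtype.ext this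
    · exfalso
      have hx : l (x : G) = 1 := x.2
      have hy : l (y : G) = 1 := y.2
      have : l ((x : G) * (y : G)⁻¹) = 1 := by simp [hx, hy]
      rw [h2] at this
      exact hlr this
  have hsurj : Function.Surjective φ := by
    rintro ⟨h, hh⟩
    obtain ⟨g, hg⟩ := hf h
    have hmh : m h = 1 := hh
    have hmg := hm g
    rw [hg, hmh] at hmg
    have hq : (Submodule.span (ZMod 2) {Multiplicative.toAdd (l r)}).mkQ
        (Multiplicative.toAdd (l g)) = 0 := Multiplicative.ofAdd.injective hmg.symm
    have hspan : Multiplicative.toAdd (l g) ∈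
        Submodule.span (ZMod 2) {Multiplicative.toAdd (l r)} := by
      rwa [Submodule.mkQ_apply, Submodule.Quotient.mk_eq_zero] at hq
    rw [Submodule.mem_span_singleton] at hspan
    obtain ⟨c, hc⟩ := hspan
    fin_cases c
    · -- c = 0 : l g = 1
      have hlg : l g = 1 := by
        have : Multiplicative.toAdd (l g) = 0 := by
          rw [← hc]; exact zero_smul (ZMod 2) _
        exact this
      exact ⟨⟨g, hlg⟩, Subtype.ext hg⟩
    · -- c = 1 : l g = l r, use g * r
      have hlg : Multiplicative.toAdd (l g) = Multiplicative.toAdd (l r) := by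
        rw [← hc]; exact one_smul (ZMod 2) _
      have hlgr : l (g * r) = 1 := by
        have : Multiplicative.toAdd (l (g * r)) = 0 := by
          rw [map_mul, toAdd_mul, hlg, hlr2]
        exact this
      refine ⟨⟨g * r, hlgr⟩, Subtype.ext ?_⟩
      show f (g * r) = h
      rw [map_mul, hfr, mul_one, hg]
  exact ⟨MulEquiv.ofBijective φ ⟨hinj, hsurj⟩, fun x => rfl⟩
end
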